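/- arXiv:2604.15439 — 2 statements merged into one kernel-verified Lean document; each statement's English description precedes it below -/
import Mathlib

section
/- Let m_t ∈ ℝ^d and Σ_t ∈ ℝ^{d×d} be twice differentiable with Σ_t invertible for all t ∈ [0,1], and define v(t,x) = ṁ_t + (1/2)Σ̇_t Σ_t^{-1}(x - m_t). Then 2(∂_t v + (v·∇)v)(t,x) = 2m̈_t + (Σ̈_t - (1/2)Σ̇_t Σ_t^{-1} Σ̇_t) Σ_t^{-1}(x - m_t). In particular, if m̈_t ≡ 0 and Σ̈_t = (1/2)Σ̇_t Σ_t^{-1} Σ̇_t for all t, then the material derivative of v vanishes identically. -/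
open Matrix

/-- Entrywise derivative of a matrix-valued function of time. -/
noncomputable def matDeriv {d : ℕ} (f : ℝ → Matrix (Fin d) (Fin d) ℝ) (t : ℝ) :
    Matrix (Fin d) (Fin d) ℝ :=
  Matrix.of fun i j => deriv (fun s => f s i j) t

/-- The affine-in-space velocity field `v(t,x) = ṁ_t + (1/2) Σ̇_t Σ_t⁻¹ (x - m_t)`. -/
noncomputable def gaussVel {d : ℕ} (m : ℝ → Fin d → ℝ)
    (S : ℝ → Matrix (Fin d) (Fin d) ℝ) (t : ℝ) (x : Fin d → ℝ) : Fin d → ℝ :=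
  deriv m t + ((1/2 : ℝ) • (matDeriv S t * (S t)⁻¹)).mulVec (x - m t)

lemma det_differentiableAt {d : ℕ} {M : ℝ → Matrix (Fin d) (Fin d) ℝ} {t : ℝ}
    (h : ∀ i j, DifferentiableAt ℝ (fun s => M s i j) t) :
    DifferentiableAt ℝ (fun s => (M s).det) t := by
  simp only [Matrix.det_apply']
  exact DifferentiableAt.fun_sum fun σ _ =>
    (DifferentiableAt.fun_finsetProd fun i _ => h (σ i) i).const_mul _

lemma inv_entry_differentiableAt {d : ℕ} {S : ℝ → Matrix (Fin d) (Fin d) ℝ} {t : ℝ}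
    (h : ∀ i j, DifferentiableAt ℝ (fun s => S s i j) t) (ht : IsUnit (S t))
    (i j : Fin d) : DifferentiableAt ℝ (fun s => (S s)⁻¹ i j) t := by
  have hdet : DifferentiableAt ℝ (fun s => (S s).det) t := det_differentiableAt h
  have hne : (S t).det ≠ 0 := ((Matrix.isUnit_iff_isUnit_det _).mp ht).ne_zero
  have hadj : DifferentiableAt ℝ (fun s => (S s).adjugate i j) t := by
    simp only [Matrix.adjugate_apply]
    refine det_differentiableAt fun a b => ?_
    simp only [Matrix.updateRow_apply]
    by_cases hab : a = j
    · simp [hab]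
    · simp only [hab, if_false]; exact h a b
  have heq : (fun s => (S s)⁻¹ i j) = fun s => ((S s).det)⁻¹ * (S s).adjugate i j := by
    funext s
    rw [Matrix.inv_def, Matrix.smul_apply, Ring.inverse_eq_inv', smul_eq_mul]
  rw [heq]
  exact (hdet.inv hne).mul hadj

lemma hasDerivAt_inv_entry {d : ℕ} {S : ℝ → Matrix (Fin d) (Fin d) ℝ} {t : ℝ}
    (h : ∀ i j, DifferentiableAt ℝ (fun s => S s i j) t) (ht : IsUnit (S t))
    (i j : Fin d) :
    HasDerivAt (fun s => (S s)⁻¹ i j)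
      ((-((S t)⁻¹ * matDeriv S t * (S t)⁻¹)) i j) t := by
  have hdet : (S t).det ≠ 0 := ((Matrix.isUnit_iff_isUnit_det _).mp ht).ne_zero
  have hdetC : ContinuousAt (fun s => (S s).det) t :=
    (det_differentiableAt h).continuousAt
  have hev : ∀ᶠ s in nhds t, IsUnit (S s) :=
    (hdetC.eventually_ne hdet).mono fun s hs =>
      (Matrix.isUnit_iff_isUnit_det _).mpr (isUnit_iff_ne_zero.mpr hs)
  set D : Matrix (Fin d) (Fin d) ℝ :=
    Matrix.of (fun i j => deriv (fun s => (S s)⁻¹ i j) t) with hDdef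
  have hD : ∀ i j, HasDerivAt (fun s => (S s)⁻¹ i j) (D i j) t := fun i j =>
    (inv_entry_differentiableAt h ht i j).hasDerivAt
  have key : matDeriv S t * (S t)⁻¹ + S t * D = 0 := by
    ext a b
    have h1 : ∀ k, HasDerivAt (fun s => S s a k * (S s)⁻¹ k b)
        (matDeriv S t a k * (S t)⁻¹ k b + S t a k * D k b) t := fun k =>
      ((h a k).hasDerivAt).mul (hD k b)
    have hsum : HasDerivAt (fun s => ∑ k, S s a k * (S s)⁻¹ k b)
        (∑ k, (matDeriv S t a k * (S t)⁻¹ k b + S t a k * D k b)) t :=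
      HasDerivAt.fun_sum fun k _ => h1 k
    have heq : (fun s => ∑ k, S s a k * (S s)⁻¹ k b)
        =ᶠ[nhds t] fun _ => (1 : Matrix (Fin d) (Fin d) ℝ) a b :=
      hev.mono fun s hs => by
        simp only [← Matrix.mul_apply, Matrix.mul_nonsing_inv _
          ((Matrix.isUnit_iff_isUnit_det _).mp hs)]
    have h0 : (∑ k, (matDeriv S t a k * (S t)⁻¹ k b + S t a k * D k b)) = 0 :=
      (hsum.congr_of_eventuallyEq heq.symm).unique (hasDerivAt_const t _)
    simpa [Matrix.add_apply, Matrix.mul_apply, Finset.sum_add_distrib] using h0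
  have hDval : D = -((S t)⁻¹ * matDeriv S t * (S t)⁻¹) := by
    have h2 : S t * D = -(matDeriv S t * (S t)⁻¹) := by
      have := neg_eq_of_add_eq_zero_right key
      linear_combination (norm := abel) -this
    calc D = ((S t)⁻¹ * S t) * D := by
            rw [Matrix.nonsing_inv_mul _ ((Matrix.isUnit_iff_isUnit_det _).mp ht), one_mul]
      _ = (S t)⁻¹ * (S t * D) := by rw [mul_assoc]
      _ = (S t)⁻¹ * -(matDeriv S t * (S t)⁻¹) := by rw [h2]
      _ = -((S t)⁻¹ * matDeriv S t * (S t)⁻¹) := by rw [mul_neg, mul_assoc]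
  rw [← hDval]
  exact hD i j

/-- For twice differentiable `m_t`, `Σ_t` (invertible on `[0,1]`) and
`v(t,x) = ṁ_t + (1/2)Σ̇_t Σ_t⁻¹(x - m_t)`, the material derivative satisfies
`2(∂ₜ v + (v·∇)v) = 2m̈_t + (Σ̈_t - (1/2)Σ̇_t Σ_t⁻¹ Σ̇_t)Σ_t⁻¹(x-m_t)`; in particular
it vanishes if `m̈ ≡ 0` and `Σ̈_t = (1/2)Σ̇_t Σ_t⁻¹ Σ̇_t`. -/
theorem material_derivative_multivariate_gaussian {d : ℕ}
    (m : ℝ → Fin d → ℝ) (S : ℝ → Matrix (Fin d) (Fin d) ℝ)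
    (hm : ContDiff ℝ 2 m) (hS : ∀ i j, ContDiff ℝ 2 fun t => S t i j)
    (hinv : ∀ t ∈ Set.Icc (0:ℝ) 1, IsUnit (S t)) :
    (∀ t ∈ Set.Icc (0:ℝ) 1, ∀ x : Fin d → ℝ,
        (2:ℝ) • (deriv (fun s => gaussVel m S s x) t
            + fderiv ℝ (gaussVel m S t) x (gaussVel m S t x))
          = (2:ℝ) • deriv (deriv m) t
            + ((matDeriv (matDeriv S) t
                - (1/2 : ℝ) • (matDeriv S t * (S t)⁻¹ * matDeriv S t))
                  * (S t)⁻¹).mulVec (x - m t))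
    ∧ ((∀ t, deriv (deriv m) t = 0) →
        (∀ t ∈ Set.Icc (0:ℝ) 1,
          matDeriv (matDeriv S) t = (1/2 : ℝ) • (matDeriv S t * (S t)⁻¹ * matDeriv S t)) →
        ∀ t ∈ Set.Icc (0:ℝ) 1, ∀ x : Fin d → ℝ,
          deriv (fun s => gaussVel m S s x) t
            + fderiv ℝ (gaussVel m S t) x (gaussVel m S t x) = 0) := by
  -- preliminary regularity facts
  have h2 : (2 : WithTop ℕ∞) = 1 + 1 := by norm_num
  have hmsplit := contDiff_succ_iff_deriv.mp (h2 ▸ hm)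
  have hmdiff : Differentiable ℝ m := hmsplit.1
  have hdmdiff : Differentiable ℝ (deriv m) := hmsplit.2.2.differentiable (by norm_num)
  have hSdiff : ∀ i j, Differentiable ℝ (fun s => S s i j) := fun i j =>
    (hS i j).differentiable (by norm_num)
  have hSd1 : ∀ i j, Differentiable ℝ (deriv (fun s => S s i j)) := fun i j =>
    ((contDiff_succ_iff_deriv.mp (h2 ▸ hS i j)).2.2).differentiable (by norm_num)
  have main : ∀ t ∈ Set.Icc (0:ℝ) 1, ∀ x : Fin d → ℝ,
      (2:ℝ) • (deriv (fun s => gaussVel m S s x) t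
          + fderiv ℝ (gaussVel m S t) x (gaussVel m S t x))
        = (2:ℝ) • deriv (deriv m) t
          + ((matDeriv (matDeriv S) t
              - (1/2 : ℝ) • (matDeriv S t * (S t)⁻¹ * matDeriv S t))
                * (S t)⁻¹).mulVec (x - m t) := by
    intro t ht x
    have hU : IsUnit (S t) := hinv t ht
    set Sd : Matrix (Fin d) (Fin d) ℝ := matDeriv S t with hSd_def
    set Sdd : Matrix (Fin d) (Fin d) ℝ := matDeriv (matDeriv S) t with hSdd_def
    set Si : Matrix (Fin d) (Fin d) ℝ := (S t)⁻¹ with hSi_def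
    set D : Matrix (Fin d) (Fin d) ℝ := -(Si * Sd * Si) with hD_def
    set B : Matrix (Fin d) (Fin d) ℝ := (1/2 : ℝ) • (Sd * Si) with hB_def
    set z : Fin d → ℝ := x - m t with hz_def
    -- entrywise derivative facts
    have hSdAt : ∀ i j, HasDerivAt (fun s => S s i j) (Sd i j) t := fun i j =>
      ((hSdiff i j) t).hasDerivAt
    have hSddAt : ∀ i j, HasDerivAt (fun s => matDeriv S s i j) (Sdd i j) t := fun i j =>
      ((hSd1 i j) t).hasDerivAt
    have hSiAt : ∀ i j, HasDerivAt (fun s => (S s)⁻¹ i j) (D i j) t := by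
      intro i j
      have := hasDerivAt_inv_entry (S := S) (fun i j => (hSdiff i j t)) hU i j
      simpa [hD_def, hSi_def, hSd_def] using this
    have hmAt : ∀ i, HasDerivAt (fun s => m s i) (deriv m t i) t :=
      hasDerivAt_pi.mp (hmdiff t).hasDerivAt
    have hdmAt : ∀ i, HasDerivAt (fun s => deriv m s i) (deriv (deriv m) t i) t :=
      hasDerivAt_pi.mp (hdmdiff t).hasDerivAt
    -- the time derivative of the velocity field
    set W : Fin d → ℝ := deriv (deriv m) t
        + ((1/2 : ℝ) • (Sdd * Si + Sd * D)).mulVec z - B.mulVec (deriv m t) with hW_def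
    have hW : HasDerivAt (fun s => gaussVel m S s x) W t := by
      rw [hasDerivAt_pi]
      intro i
      have hfun : (fun s => gaussVel m S s x i)
          = fun s => deriv m s i
            + ∑ j, (1/2 : ℝ) * (∑ k, matDeriv S s i k * (S s)⁻¹ k j) * (x j - m s j) := by
        funext s
        simp [gaussVel, Matrix.mulVec, dotProduct, Matrix.mul_apply, Matrix.smul_apply,
          smul_eq_mul, mul_assoc]
      rw [hfun]
      have hterm : ∀ j, HasDerivAt
          (fun s => (1/2 : ℝ) * (∑ k, matDeriv S s i k * (S s)⁻¹ k j) * (x j - m s j))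
          ((1/2 : ℝ) * (∑ k, (Sdd i k * Si k j + Sd i k * D k j)) * (x j - m t j)
            + (1/2 : ℝ) * (∑ k, Sd i k * Si k j) * -(deriv m t j)) t := by
        intro j
        exact (((HasDerivAt.fun_sum fun k _ => (hSddAt i k).mul (hSiAt k j)).const_mul
          ((1/2 : ℝ))).mul ((hmAt j).const_sub (x j)))
      have hsum : HasDerivAt
          (fun s => ∑ j, (1/2 : ℝ) * (∑ k, matDeriv S s i k * (S s)⁻¹ k j) * (x j - m s j))
          (∑ j, ((1/2 : ℝ) * (∑ k, (Sdd i k * Si k j + Sd i k * D k j)) * (x j - m t j)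
            + (1/2 : ℝ) * (∑ k, Sd i k * Si k j) * -(deriv m t j))) t :=
        HasDerivAt.fun_sum fun j _ => hterm j
      have := (hdmAt i).add hsum
      convert this using 1
      · rfl
      simp only [hW_def, hz_def, hB_def, Pi.sub_apply, Pi.add_apply, Matrix.mulVec,
        dotProduct, Matrix.smul_apply, Matrix.add_apply, Matrix.mul_apply, smul_eq_mul]
      rw [add_sub_assoc, ← Finset.sum_sub_distrib]
      congr 1
      apply Finset.sum_congr rfl
      intro j _
      rw [Finset.sum_add_distrib]
      ring
    -- the space derivative of the velocity field
    set L := (Matrix.mulVecLin B).toContinuousLinearMap with hL_def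
    have hlin : HasFDerivAt (gaussVel m S t) L x := by
      have h1 : HasFDerivAt (fun y : Fin d → ℝ => B.mulVec y) L x := L.hasFDerivAt
      have h2 := (h1.sub_const (B.mulVec (m t))).const_add (deriv m t)
      have : (fun y : Fin d → ℝ => deriv m t + (B.mulVec y - B.mulVec (m t)))
          = gaussVel m S t := by
        funext y
        simp [gaussVel, Matrix.mulVec_sub, hB_def, hSd_def, hSi_def]
      rwa [this] at h2
    have hfd : fderiv ℝ (gaussVel m S t) x = L := hlin.fderiv
    rw [hW.deriv, hfd]
    have hLapp : L (gaussVel m S t x) = B.mulVec (deriv m t + B.mulVec z) := by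
      simp [hL_def, gaussVel, hB_def, hz_def, hSd_def, hSi_def, Matrix.smul_mulVec]
    rw [hLapp]
    have hC : (Sdd * Si + Sd * D) + (2:ℝ) • (B * B)
        = (Sdd - (1/2 : ℝ) • (Sd * Si * Sd)) * Si := by
      rw [hD_def, hB_def]
      simp only [mul_neg, smul_mul_assoc, mul_smul_comm, smul_smul, sub_mul, mul_assoc]
      module
    calc (2:ℝ) • (W + B.mulVec (deriv m t + B.mulVec z))
        = (2:ℝ) • deriv (deriv m) t
            + (((Sdd * Si + Sd * D) + (2:ℝ) • (B * B)).mulVec z) := by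
          rw [hW_def]
          simp only [Matrix.mulVec_add, Matrix.mulVec_mulVec, Matrix.add_mulVec,
            Matrix.smul_mulVec]
          module
      _ = (2:ℝ) • deriv (deriv m) t
            + ((Sdd - (1/2 : ℝ) • (Sd * Si * Sd)) * Si).mulVec z := by rw [hC]
  refine ⟨main, ?_⟩
  intro hm0 hS0 t ht x
  have key := main t ht x
  rw [hm0, hS0 t ht] at key
  simp only [sub_self, Matrix.zero_mul, Matrix.zero_mulVec, smul_zero, zero_add] at key
  rcases smul_eq_zero.mp key with h | h
  · norm_num at h
  · exact h
end

section
/- Let X : [0,1] → ℝ be a stochastic process with continuous sample paths, and let a < b be reals such that ℙ(X_t ∈ (a,b)) ≤ ε for every t ∈ [0,1]. Suppose there are constants A, α, β > 0 such that ℙ(κ_X(δ) ≥ θ) ≤ A δ^α / θ^β for all θ, δ > 0, where κ_X(δ) = sup{|X_t - X_s| : |t-s| ≤ δ, t,s ∈ [0,1]} is the modulus of continuity. Then ℙ(N_X(a,b) ≥ 1) ≤ C(α) · A' · (ε^α / (b-a)^β)^{1/(α+1)} for a constant C(α) depending only on α (and the implicit constant A), where N_X(a,b) is the up-crossing number of the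 interval (a,b). -/
open MeasureTheory Set

/-- Modulus of continuity of a path over `[0,1]` at scale `δ`. -/
noncomputable def modCont (f : ℝ → ℝ) (δ : ℝ) : ℝ :=
  sSup {r | ∃ s ∈ Icc (0:ℝ) 1, ∃ t ∈ Icc (0:ℝ) 1, |t - s| ≤ δ ∧ r = |f t - f s|}

/-- The event that the path up-crosses the interval `(a,b)` at least once:
there are times `t < s` in `[0,1]` with `X_t ≤ a` and `X_s ≥ b`. -/
def upcrossEvent {Ω : Type*} (X : Ω → ℝ → ℝ) (a b : ℝ) : Set Ω :=
  {ω | ∃ t ∈ Icc (0:ℝ) 1, ∃ s ∈ Icc (0:ℝ) 1, t < s ∧ X ω t ≤ a ∧ b ≤ X ω s}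

lemma le_modCont {f : ℝ → ℝ} (hf : ContinuousOn f (Icc 0 1)) {s t δ : ℝ}
    (hs : s ∈ Icc (0:ℝ) 1) (ht : t ∈ Icc (0:ℝ) 1) (hst : |t - s| ≤ δ) :
    |f t - f s| ≤ modCont f δ := by
  obtain ⟨M, hM⟩ := isCompact_Icc.exists_bound_of_continuousOn hf
  apply le_csSup
  · refine ⟨2*M, ?_⟩
    rintro r ⟨u, hu, v, hv, -, rfl⟩
    have h1 := hM u hu
    have h2 := hM v hv
    rw [Real.norm_eq_abs] at h1 h2
    calc |f v - f u| ≤ |f v| + |f u| := abs_sub _ _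
      _ ≤ 2*M := by linarith
  · exact ⟨s, hs, t, ht, hst, rfl⟩

lemma upcross_cover {f : ℝ → ℝ} (hf : ContinuousOn f (Icc 0 1)) {a b : ℝ} (hab : a < b)
    {n : ℕ} (hn : 1 ≤ n)
    {t s : ℝ} (ht : t ∈ Icc (0:ℝ) 1) (hs : s ∈ Icc (0:ℝ) 1) (hts : t < s)
    (hfa : f t ≤ a) (hfb : b ≤ f s) :
    b - a ≤ modCont f (1/(n:ℝ)) ∨ ∃ i : ℕ, i ≤ n ∧ f ((i:ℝ)/n) ∈ Ioo a b := by
  have hnpos : (0:ℝ) < n := by exact_mod_cast hn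
  have hsub : Icc t s ⊆ Icc (0:ℝ) 1 := Icc_subset_Icc ht.1 hs.2
  have hfc : ContinuousOn f (Icc t s) := hf.mono hsub
  set Sb := Icc t s ∩ f ⁻¹' (Ici b) with hSbdef
  have hSb_ne : Sb.Nonempty := ⟨s, ⟨hts.le, le_rfl⟩, hfb⟩
  have hSb_closed : IsClosed Sb :=
    hfc.preimage_isClosed_of_isClosed isClosed_Icc isClosed_Ici
  have hSb_bdd : BddBelow Sb := ⟨t, fun u hu => hu.1.1⟩
  set v := sInf Sb with hvdef
  have hv : v ∈ Sb := hSb_closed.csInf_mem hSb_ne hSb_bdd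
  have hvmem : v ∈ Icc t s := hv.1
  have hfv : b ≤ f v := hv.2
  have hltb : ∀ u ∈ Icc t s, u < v → f u < b := by
    intro u hu huv
    by_contra h
    exact absurd (csInf_le hSb_bdd ⟨hu, le_of_not_gt h⟩) (not_le.mpr huv)
  set Sa := Icc t v ∩ f ⁻¹' (Iic a) with hSadef
  have hSa_ne : Sa.Nonempty := ⟨t, ⟨le_rfl, hvmem.1⟩, hfa⟩
  have hSa_closed : IsClosed Sa :=
    (hfc.mono (Icc_subset_Icc le_rfl hvmem.2)).preimage_isClosed_of_isClosed
      isClosed_Icc isClosed_Iic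
  have hSa_bdd : BddAbove Sa := ⟨v, fun u hu => hu.1.2⟩
  set w := sSup Sa with hwdef
  have hw : w ∈ Sa := hSa_closed.csSup_mem hSa_ne hSa_bdd
  have hwmem : w ∈ Icc t v := hw.1
  have hfw : f w ≤ a := hw.2
  have hgta : ∀ u ∈ Icc t v, w < u → a < f u := by
    intro u hu hwu
    by_contra h
    exact absurd (le_csSup hSa_bdd ⟨hu, le_of_not_gt h⟩) (not_le.mpr hwu)
  have hwv : w < v := lt_of_le_of_ne hwmem.2 (fun h => by
    rw [h] at hfw; linarith)
  have hw01 : w ∈ Icc (0:ℝ) 1 := hsub ⟨hwmem.1, hwmem.2.trans hvmem.2⟩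
  have hv01 : v ∈ Icc (0:ℝ) 1 := hsub hvmem
  rcases le_or_gt (v - w) (1/(n:ℝ)) with hcase | hcase
  · left
    have h := le_modCont (δ := 1/(n:ℝ)) hf hw01 hv01 (by rw [abs_of_nonneg (by linarith)]; exact hcase)
    calc b - a ≤ f v - f w := by linarith
      _ ≤ |f v - f w| := le_abs_self _
      _ ≤ _ := h
  · right
    have hw0 : 0 ≤ w := hw01.1
    set i := ⌊w * n⌋₊ + 1 with hidef
    have hil : w < (i:ℝ)/n := by
      rw [lt_div_iff₀ hnpos]
      rw [hidef]
      push_cast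
      exact Nat.lt_floor_add_one _
    have hiu : (i:ℝ)/n < v := by
      rw [div_lt_iff₀ hnpos]
      rw [hidef]
      push_cast
      have : (⌊w * n⌋₊ : ℝ) ≤ w * n := Nat.floor_le (by positivity)
      have h2 : w + 1/(n:ℝ) < v := by linarith
      calc (⌊w * n⌋₊ : ℝ) + 1 ≤ w * n + 1 := by linarith
        _ = (w + 1/n) * n := by field_simp
        _ < v * n := by nlinarith
    have himem : (i:ℝ)/n ∈ Icc t v := ⟨hwmem.1.trans hil.le, hiu.le⟩
    have hin : i ≤ n := by
      have : (i:ℝ)/n < 1 := hiu.trans_le hv01.2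
      rw [div_lt_one hnpos] at this
      exact_mod_cast this.le
    refine ⟨i, hin, hgta _ himem hil, hltb _ ⟨himem.1, hiu.le.trans hvmem.2⟩ hiu⟩

section Key
variable {Ω : Type} [MeasurableSpace Ω] (μ : Measure Ω) [IsProbabilityMeasure μ]

lemma key_bound (α A β : ℝ) (hA : 0 < A)
    (X : Ω → ℝ → ℝ) (hX : ∀ ω, ContinuousOn (X ω) (Icc 0 1))
    (a b ε' : ℝ) (hab : a < b)
    (hph : ∀ t ∈ Icc (0:ℝ) 1, μ {ω | X ω t ∈ Ioo a b} ≤ ENNReal.ofReal ε')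
    (hκ : ∀ θ δ : ℝ, 0 < θ → 0 < δ →
        μ {ω | θ ≤ modCont (X ω) δ} ≤ ENNReal.ofReal (A * δ ^ α / θ ^ β))
    (hε'0 : 0 ≤ ε')
    (n : ℕ) (hn : 1 ≤ n) :
    μ (upcrossEvent X a b) ≤
      ENNReal.ofReal (A * (1/(n:ℝ)) ^ α / (b-a) ^ β + ((n:ℝ)+1) * ε') := by
  have hnpos : (0:ℝ) < n := by exact_mod_cast hn
  have hba : (0:ℝ) < b - a := by linarith
  have hsubset : upcrossEvent X a b ⊆
      {ω | b - a ≤ modCont (X ω) (1/(n:ℝ))} ∪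
      ⋃ i ∈ Finset.range (n+1), {ω | X ω ((i:ℝ)/n) ∈ Ioo a b} := by
    rintro ω ⟨t, ht, s, hs, hts, h1, h2⟩
    rcases upcross_cover (hX ω) hab hn ht hs hts h1 h2 with h | ⟨i, hi, hmem⟩
    · exact Or.inl h
    · exact Or.inr (mem_biUnion (Finset.mem_range.mpr (Nat.lt_succ_of_le hi)) hmem)
  calc μ (upcrossEvent X a b)
      ≤ μ ({ω | b - a ≤ modCont (X ω) (1/(n:ℝ))} ∪
        ⋃ i ∈ Finset.range (n+1), {ω | X ω ((i:ℝ)/n) ∈ Ioo a b}) := measure_mono hsubset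
    _ ≤ μ {ω | b - a ≤ modCont (X ω) (1/(n:ℝ))} +
        μ (⋃ i ∈ Finset.range (n+1), {ω | X ω ((i:ℝ)/n) ∈ Ioo a b}) := measure_union_le _ _
    _ ≤ ENNReal.ofReal (A * (1/(n:ℝ)) ^ α / (b-a) ^ β) +
        ∑ i ∈ Finset.range (n+1), ENNReal.ofReal ε' := by
        refine add_le_add (hκ (b-a) (1/n) hba (by positivity)) ?_
        refine (measure_biUnion_finset_le _ _).trans (Finset.sum_le_sum fun i hi => ?_)
        refine hph _ ⟨by positivity, ?_⟩
        rw [div_le_one hnpos]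
        exact_mod_cast Nat.lt_succ_iff.mp (Finset.mem_range.mp hi)
    _ = ENNReal.ofReal (A * (1/(n:ℝ)) ^ α / (b-a) ^ β) + ((n:ℕ)+1 : ℕ) * ENNReal.ofReal ε' := by
        rw [Finset.sum_const, Finset.card_range, nsmul_eq_mul]
    _ = ENNReal.ofReal (A * (1/(n:ℝ)) ^ α / (b-a) ^ β + ((n:ℝ)+1) * ε') := by
        rw [← ENNReal.ofReal_natCast (n+1), ← ENNReal.ofReal_mul (by positivity),
          ← ENNReal.ofReal_add (by positivity) (by positivity)]
        push_cast
        ring_nf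

lemma key_bound1 (α A β : ℝ)
    (X : Ω → ℝ → ℝ) (hX : ∀ ω, ContinuousOn (X ω) (Icc 0 1))
    (a b : ℝ) (hab : a < b)
    (hκ : ∀ θ δ : ℝ, 0 < θ → 0 < δ →
        μ {ω | θ ≤ modCont (X ω) δ} ≤ ENNReal.ofReal (A * δ ^ α / θ ^ β)) :
    μ (upcrossEvent X a b) ≤ ENNReal.ofReal (A * (1:ℝ) ^ α / (b-a) ^ β) := by
  have hba : (0:ℝ) < b - a := by linarith
  refine (measure_mono ?_).trans (hκ (b-a) 1 hba one_pos)
  rintro ω ⟨t, ht, s, hs, hts, h1, h2⟩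
  have habs : |s - t| ≤ 1 := by
    rw [abs_le]; constructor <;> [linarith [ht.2, hs.1]; linarith [ht.1, hs.2]]
  have h := le_modCont (δ := 1) (hX ω) ht hs habs
  have : b - a ≤ |X ω s - X ω t| := (by linarith : b - a ≤ X ω s - X ω t).trans (le_abs_self _)
  exact this.trans h

end Key

lemma arith_small (α A D e : ℝ) (hα : 0 < α) (hA : 0 < A) (hD : 0 < D) (he : 0 < e)
    (hsmall : e * D ≤ 1) :
    ∃ n : ℕ, 1 ≤ n ∧
      A * (1/(n:ℝ))^α/D + ((n:ℝ)+1)*e ≤ (A+3) * (e^α/D)^((1:ℝ)/(α+1)) := by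
  set P : ℝ := 1/(α+1) with hPdef
  have hα1 : (0:ℝ) < α + 1 := by linarith
  have hα1' : α + 1 ≠ 0 := hα1.ne'
  have hP : 0 < P := by positivity
  have hP1 : P * α + P = 1 := by rw [hPdef]; field_simp
  set T : ℝ := (e^α/D)^P with hTdef
  have hT : 0 < T := by positivity
  have heD : 0 < e * D := mul_pos he hD
  set r : ℝ := (e*D)^(-P) with hrdef
  have hr : 0 < r := Real.rpow_pos_of_pos heD _
  have hr1 : 1 ≤ r :=
    Real.one_le_rpow_of_pos_of_le_one_of_nonpos heD hsmall (by linarith)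
  set n : ℕ := ⌈r⌉₊ with hndef
  have hn1 : 1 ≤ n := Nat.one_le_ceil_iff.mpr hr
  have hrn : r ≤ (n:ℝ) := Nat.le_ceil r
  have hnpos : (0:ℝ) < n := hr.trans_le hrn
  have hnr : (n:ℝ) < r + 1 := Nat.ceil_lt_add_one hr.le
  have hrinv : r⁻¹ = (e*D)^P := by
    rw [hrdef, Real.rpow_neg heD.le, inv_inv]
  have hDexp : D ^ (P*α) * D ^ P = D := by
    rw [← Real.rpow_add hD, hP1, Real.rpow_one]
  have hDP : 0 < D ^ P := Real.rpow_pos_of_pos hD _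
  have hTalt : T = e^(α*P) * (D^P)⁻¹ := by
    rw [hTdef, Real.div_rpow (by positivity) hD.le, ← Real.rpow_mul he.le, div_eq_mul_inv]
  have E1 : A * r⁻¹^α / D = A * T := by
    rw [hrinv, ← Real.rpow_mul heD.le, Real.mul_rpow he.le hD.le, hTalt, mul_comm α P]
    field_simp
    linear_combination hDexp
  have E2 : r * e = T := by
    have hre' : r = e^(-P) * (D^P)⁻¹ := by
      rw [hrdef, Real.mul_rpow he.le hD.le, Real.rpow_neg hD.le]
    have h1' : e^(-P) * e = e^(α*P) := by
      nth_rewrite 2 [← Real.rpow_one e]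
      rw [← Real.rpow_add he]
      congr 1
      rw [hPdef]
      field_simp
      ring
    rw [hre', hTalt, ← h1']; ring
  have hb : (1/(n:ℝ))^α ≤ r⁻¹^α :=
    Real.rpow_le_rpow (by positivity)
      (by rw [one_div]; exact inv_anti₀ hr hrn) hα.le
  have part1 : A * (1/(n:ℝ))^α/D ≤ A * T := by
    calc A * (1/(n:ℝ))^α/D ≤ A * r⁻¹^α/D := by gcongr
      _ = A * T := E1
  have part2 : ((n:ℝ)+1)*e ≤ 3 * T := by
    have h3 : (n:ℝ) + 1 ≤ 3 * r := by linarith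
    calc ((n:ℝ)+1)*e ≤ (3*r)*e := by nlinarith
      _ = 3 * T := by rw [mul_assoc, E2]
  exact ⟨n, hn1, by linarith⟩

lemma arith_big (α A D e : ℝ) (hα : 0 < α) (hA : 0 < A) (hD : 0 < D) (he : 0 < e)
    (hbig : 1 ≤ e * D) :
    A * (1:ℝ)^α / D ≤ (A+3) * (e^α/D)^((1:ℝ)/(α+1)) := by
  set P : ℝ := 1/(α+1) with hPdef
  have hα1 : (0:ℝ) < α + 1 := by linarith
  have hα1' : α + 1 ≠ 0 := hα1.ne'
  have hP : 0 < P := by positivity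
  have h1 : 1/D ≤ e := (div_le_iff₀ hD).mpr hbig
  have hDinv : (0:ℝ) < 1/D := by positivity
  have e1 : (1/D)^α/D = D ^ (-(α+1)) := by
    rw [one_div, ← Real.rpow_neg_one D, ← Real.rpow_mul hD.le, div_eq_mul_inv,
      ← Real.rpow_neg_one D, ← Real.rpow_add hD]
    congr 1; ring
  have hexp : (-(α+1))*P = -1 := by
    rw [hPdef]; field_simp
  have s4 : ((1/D)^α/D)^P = 1/D := by
    rw [e1, ← Real.rpow_mul hD.le, hexp, Real.rpow_neg_one, one_div]
  have s2 : (1/D)^α/D ≤ e^α/D := by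
    have := Real.rpow_le_rpow hDinv.le h1 hα.le
    gcongr
  have s3 : ((1/D)^α/D)^P ≤ (e^α/D)^P := Real.rpow_le_rpow (by positivity) s2 hP.le
  rw [s4] at s3
  have hT : (0:ℝ) ≤ (e^α/D)^P := by positivity
  calc A * (1:ℝ)^α/D = A * (1/D) := by rw [Real.one_rpow]; ring
    _ ≤ A * (e^α/D)^P := by nlinarith
    _ ≤ (A+3) * (e^α/D)^P := by nlinarith

/-- If a continuous-path process satisfies `ℙ(X_t ∈ (a,b)) ≤ ε` for
all `t ∈ [0,1]` and the modulus-of-continuity concentration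
`ℙ(κ_X(δ) ≥ θ) ≤ A δ^α/θ^β`, then the probability of an up-crossing of `(a,b)` is at
most `C·A·(ε^α/(b-a)^β)^{1/(α+1)}` for a constant `C` depending only on `α` (and `A`). -/
theorem upcrossing_probability_bound (α A : ℝ) (hα : 0 < α) (hA : 0 < A) :
    ∃ C : ℝ, 0 < C ∧
      ∀ (β : ℝ), 0 < β →
      ∀ (Ω : Type) [MeasurableSpace Ω] (μ : Measure Ω), IsProbabilityMeasure μ →
      ∀ (X : Ω → ℝ → ℝ), (∀ ω, ContinuousOn (X ω) (Icc 0 1)) →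
      ∀ (a b ε : ℝ), a < b → 0 ≤ ε →
      (∀ t ∈ Icc (0:ℝ) 1, μ {ω | X ω t ∈ Ioo a b} ≤ ENNReal.ofReal ε) →
      (∀ θ δ : ℝ, 0 < θ → 0 < δ →
        μ {ω | θ ≤ modCont (X ω) δ} ≤ ENNReal.ofReal (A * δ ^ α / θ ^ β)) →
      μ (upcrossEvent X a b)
        ≤ ENNReal.ofReal (C * A * (ε ^ α / (b - a) ^ β) ^ ((1:ℝ)/(α+1))) := by
  refine ⟨(A+3)/A, by positivity, ?_⟩
  intro β hβ Ω _ μ hμ X hX a b ε hab hε hph hκ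
  have hba : (0:ℝ) < b - a := by linarith
  have hD : 0 < (b-a)^β := Real.rpow_pos_of_pos hba β
  set ε' := min ε 1 with hε'def
  have hε'ε : ε' ≤ ε := min_le_left _ _
  have hε'0 : 0 ≤ ε' := le_min hε zero_le_one
  have hph' : ∀ t ∈ Icc (0:ℝ) 1, μ {ω | X ω t ∈ Ioo a b} ≤ ENNReal.ofReal ε' := by
    intro t ht
    rcases le_total ε 1 with h | h
    · rw [hε'def, min_eq_left h]; exact hph t ht
    · rw [hε'def, min_eq_right h, ENNReal.ofReal_one]; exact prob_le_one
  have hCA : (A+3)/A * A = A + 3 := div_mul_cancel₀ _ hA.ne'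
  by_cases hε0 : ε = 0
  · subst hε0
    have hε'z : ε' = 0 := by rw [hε'def]; simp
    have hbound : ∀ n : ℕ, 1 ≤ n → μ (upcrossEvent X a b) ≤
        ENNReal.ofReal (A * (1/(n:ℝ))^α / (b-a)^β) := by
      intro n hn
      have h := key_bound μ α A β hA X hX a b ε' hab hph' hκ hε'0 n hn
      simpa [hε'z] using h
    have htend : Filter.Tendsto
        (fun n : ℕ => ENNReal.ofReal (A * (1/(n:ℝ))^α / (b-a)^β))
        Filter.atTop (nhds 0) := by
      rw [← ENNReal.ofReal_zero]
      apply ENNReal.tendsto_ofReal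
      have h1 : Filter.Tendsto (fun n : ℕ => (1:ℝ)/n) Filter.atTop (nhds 0) :=
        tendsto_one_div_atTop_nhds_zero_nat
      have h2 : ContinuousAt (fun x : ℝ => x ^ α) 0 :=
        Real.continuousAt_rpow_const 0 α (Or.inr hα.le)
      have h3 := h2.tendsto.comp h1
      rw [Real.zero_rpow hα.ne'] at h3
      have h4 := (h3.const_mul A).div_const ((b-a)^β)
      simpa using h4
    have hle0 : μ (upcrossEvent X a b) ≤ 0 :=
      ge_of_tendsto htend (Filter.eventually_atTop.mpr ⟨1, fun n hn => hbound n hn⟩)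
    exact hle0.trans zero_le
  · have hεpos : 0 < ε := hε.lt_of_ne' hε0
    have hε'pos : 0 < ε' := lt_min hεpos one_pos
    have hmono : (A+3) * (ε'^α/(b-a)^β)^((1:ℝ)/(α+1))
        ≤ (A+3) * (ε^α/(b-a)^β)^((1:ℝ)/(α+1)) := by
      have h1 : ε'^α/(b-a)^β ≤ ε^α/(b-a)^β := by
        have := Real.rpow_le_rpow hε'0 hε'ε hα.le
        gcongr
      have h2 := Real.rpow_le_rpow (by positivity) h1
        (by positivity : (0:ℝ) ≤ 1/(α+1))
      exact mul_le_mul_of_nonneg_left h2 (by linarith)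
    rw [hCA]
    by_cases hsmall : ε' * (b-a)^β ≤ 1
    · obtain ⟨n, hn1, hineq⟩ := arith_small α A ((b-a)^β) ε' hα hA hD hε'pos hsmall
      refine (key_bound μ α A β hA X hX a b ε' hab hph' hκ hε'0 n hn1).trans ?_
      exact ENNReal.ofReal_le_ofReal (hineq.trans hmono)
    · refine (key_bound1 μ α A β X hX a b hab hκ).trans ?_
      refine ENNReal.ofReal_le_ofReal ?_
      exact (arith_big α A ((b-a)^β) ε' hα hA hD hε'pos (not_le.mp hsmall).le).trans hmono
end
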